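/- arXiv:2311.01990 — 5 statements merged into one kernel-verified Lean document; each statement's English description precedes it below -/
import Mathlib

section
/- Let X be a finite nonempty set and ≼ a total consistent preorder on Dist(X) (probability distributions on X). If α₁,...,αₙ are nonnegative reals summing to one and A₁,...,Aₙ, B₁,...,Bₙ are distributions on X with Aᵢ ≼ Bᵢ for all i, then Σ αᵢAᵢ ≼ Σ αᵢBᵢ. -/
open Finset

/-- `p` is a probability mass function on the finite type `X`. -/
def IsDist {X : Type*} [Fintype X] (p : X → ℝ) : Prop :=
  (∀ x, 0 ≤ p x) ∧ ∑ x, p x = 1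

/-- Pointwise convex combination of two (distributions viewed as) functions. -/
def mix {X : Type*} (α : ℝ) (A B : X → ℝ) : X → ℝ :=
  fun x => α * A x + (1 - α) * B x

/-- `R` restricted to distributions is a total consistent preorder. -/
def TotalConsistentPreorder {X : Type*} [Fintype X]
    (R : (X → ℝ) → (X → ℝ) → Prop) : Prop :=
  (∀ A, IsDist A → R A A) ∧
  (∀ A B C, IsDist A → IsDist B → IsDist C → R A B → R B C → R A C) ∧
  (∀ A B, IsDist A → IsDist B → (R A B ∨ R B A)) ∧
  (∀ α : ℝ, 0 < α → α < 1 → ∀ A B C, IsDist A → IsDist B → IsDist C →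
    R A B → R (mix α A C) (mix α B C))

lemma isDist_mixture {X : Type*} [Fintype X] (n : ℕ) (α : Fin n → ℝ)
    (hα : ∀ i, 0 ≤ α i) (hsum : ∑ i, α i = 1)
    (A : Fin n → X → ℝ) (hA : ∀ i, IsDist (A i)) :
    IsDist (fun x => ∑ i, α i * A i x) := by
  constructor
  · intro x
    exact Finset.sum_nonneg fun i _ => mul_nonneg (hα i) ((hA i).1 x)
  · rw [Finset.sum_comm]
    calc ∑ i, ∑ x, α i * A i x = ∑ i, α i * ∑ x, A i x := by
          simp [Finset.mul_sum]
      _ = ∑ i, α i := by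
          refine Finset.sum_congr rfl fun i _ => ?_
          rw [(hA i).2, mul_one]
      _ = 1 := hsum

lemma isDist_mix {X : Type*} [Fintype X] (a : ℝ) (ha0 : 0 ≤ a) (ha1 : a ≤ 1)
    (A B : X → ℝ) (hA : IsDist A) (hB : IsDist B) : IsDist (mix a A B) := by
  constructor
  · intro x
    exact add_nonneg (mul_nonneg ha0 (hA.1 x)) (mul_nonneg (by linarith) (hB.1 x))
  · simp only [mix]
    rw [Finset.sum_add_distrib, ← Finset.mul_sum, ← Finset.mul_sum, hA.2, hB.2]
    ring

/-- mixtures of pairwise related distributions are related. -/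
theorem mixture_monotone {X : Type*} [Fintype X] [Nonempty X]
    (R : (X → ℝ) → (X → ℝ) → Prop) (hR : TotalConsistentPreorder R)
    (n : ℕ) (α : Fin n → ℝ) (hα : ∀ i, 0 ≤ α i) (hsum : ∑ i, α i = 1)
    (A B : Fin n → X → ℝ) (hA : ∀ i, IsDist (A i)) (hB : ∀ i, IsDist (B i))
    (hAB : ∀ i, R (A i) (B i)) :
    R (fun x => ∑ i, α i * A i x) (fun x => ∑ i, α i * B i x) := by
  induction n with
  | zero => simp at hsum
  | succ n ih =>
    set a := α 0 with ha_def
    have htail : ∑ i : Fin n, α i.succ = 1 - a := by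
      have := hsum
      rw [Fin.sum_univ_succ] at this
      linarith
    by_cases ha1 : a = 1
    · -- all tail weights are zero
      have hz : ∀ i : Fin n, α i.succ = 0 := by
        have h0 : ∑ i : Fin n, α i.succ = 0 := by rw [htail, ha1]; ring
        intro i
        have := (Finset.sum_eq_zero_iff_of_nonneg
          (fun j _ => hα (j.succ))).mp h0 i (Finset.mem_univ i)
        exact this
      have eA : (fun x => ∑ i, α i * A i x) = A 0 := by
        funext x
        rw [Fin.sum_univ_succ, ← ha_def, ha1]
        simp [hz]
      have eB : (fun x => ∑ i, α i * B i x) = B 0 := by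
        funext x
        rw [Fin.sum_univ_succ, ← ha_def, ha1]
        simp [hz]
      rw [eA, eB]
      exact hAB 0
    · have ha1' : a < 1 := lt_of_le_of_ne (by
        have : ∑ i : Fin n, α i.succ ≥ 0 := Finset.sum_nonneg fun i _ => hα _
        linarith) ha1
      have h1a : 0 < 1 - a := by linarith
      set β : Fin n → ℝ := fun i => α i.succ / (1 - a) with hβ_def
      have hβ : ∀ i, 0 ≤ β i := fun i => div_nonneg (hα _) (le_of_lt h1a)
      have hβsum : ∑ i, β i = 1 := by
        rw [hβ_def]
        rw [← Finset.sum_div, htail]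
        field_simp
      set CA : X → ℝ := fun x => ∑ i, β i * A i.succ x with hCA_def
      set CB : X → ℝ := fun x => ∑ i, β i * B i.succ x with hCB_def
      have hCAd : IsDist CA := isDist_mixture n β hβ hβsum _ (fun i => hA i.succ)
      have hCBd : IsDist CB := isDist_mixture n β hβ hβsum _ (fun i => hB i.succ)
      have hRC : R CA CB :=
        ih β hβ hβsum _ _ (fun i => hA i.succ) (fun i => hB i.succ) (fun i => hAB i.succ)
      have eA : (fun x => ∑ i, α i * A i x) = mix a (A 0) CA := by
        funext x
        rw [Fin.sum_univ_succ]
        simp only [mix, hCA_def, hβ_def, Finset.mul_sum]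
        congr 1
        refine Finset.sum_congr rfl fun i _ => ?_
        field_simp
      have eB : (fun x => ∑ i, α i * B i x) = mix a (B 0) CB := by
        funext x
        rw [Fin.sum_univ_succ]
        simp only [mix, hCB_def, hβ_def, Finset.mul_sum]
        congr 1
        refine Finset.sum_congr rfl fun i _ => ?_
        field_simp
      rw [eA, eB]
      by_cases ha0 : a = 0
      · have e1 : mix a (A 0) CA = CA := by
          funext x; simp [mix, ha0]
        have e2 : mix a (B 0) CB = CB := by
          funext x; simp [mix, ha0]
        rw [e1, e2]; exact hRC
      · have ha0' : 0 < a := lt_of_le_of_ne (hα 0) (Ne.symm ha0)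
        -- step 1: mix a A0 CA ≼ mix a B0 CA
        have s1 : R (mix a (A 0) CA) (mix a (B 0) CA) :=
          hR.2.2.2 a ha0' ha1' _ _ _ (hA 0) (hB 0) hCAd (hAB 0)
        -- step 2: mix a B0 CA ≼ mix a B0 CB via mixing CA ≼ CB with B0
        have s2' : R (mix (1 - a) CA (B 0)) (mix (1 - a) CB (B 0)) :=
          hR.2.2.2 (1 - a) h1a (by linarith) _ _ _ hCAd hCBd (hB 0) hRC
        have e3 : mix (1 - a) CA (B 0) = mix a (B 0) CA := by
          funext x; simp [mix]; ring
        have e4 : mix (1 - a) CB (B 0) = mix a (B 0) CB := by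
          funext x; simp [mix]; ring
        rw [e3, e4] at s2'
        exact hR.2.1 _ _ _
          (isDist_mix a (le_of_lt ha0') (le_of_lt ha1') _ _ (hA 0) hCAd)
          (isDist_mix a (le_of_lt ha0') (le_of_lt ha1') _ _ (hB 0) hCAd)
          (isDist_mix a (le_of_lt ha0') (le_of_lt ha1') _ _ (hB 0) hCBd)
          s1 s2'
end

section
/- Let Ω be a finite set, E a proper nonempty subset of Ω, u: Ω → ℝ with u non-constant on Ω∖E, and β ∈ ℝ with β < u(ω) for all ω ∈ Ω. Define φ(A) = Σ_ω u(ω)A(ω) if A(E)=0 and φ(A) = β·e^{A(E)} if A(E)>0, and A ≼_φ B ⟺ φ(A) ≤ φ(B). Then ≼_φ is not convex: there exist α ∈ (0,1) and distributions A,B,C with αA+(1−α)C ≼_φ αB+(1−α)C but not A ≼_φ B. -/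
open Finset

open Classical in
/-- The unacceptable-risk performance function. -/
noncomputable def riskPhi {Ω : Type*} [Fintype Ω] (E : Finset Ω) (u : Ω → ℝ) (β : ℝ)
    (A : Ω → ℝ) : ℝ :=
  if (∑ ω ∈ E, A ω) = 0 then ∑ ω, u ω * A ω else β * Real.exp (∑ ω ∈ E, A ω)

open Classical in
lemma delta_isDist {Ω : Type*} [Fintype Ω] (a : Ω) :
    IsDist (fun x => if x = a then (1:ℝ) else 0) := by
  constructor
  · intro x; simp only []; positivity
  · simp

open Classical in
lemma phi_delta {Ω : Type*} [Fintype Ω] (E : Finset Ω) (u : Ω → ℝ) (β : ℝ)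
    (a : Ω) (ha : a ∉ E) :
    riskPhi E u β (fun x => if x = a then (1:ℝ) else 0) = u a := by
  have h1 : (∑ ω ∈ E, if ω = a then (1:ℝ) else 0) = 0 := by
    rw [Finset.sum_ite_eq' E a (fun _ => (1:ℝ))]
    simp [ha]
  rw [riskPhi, if_pos h1]
  simp [mul_ite]

/-- `≼_φ` is not convex. -/
theorem riskPhi_not_convex {Ω : Type*} [Fintype Ω]
    (E : Finset Ω) (hE : E.Nonempty) (hEproper : E ≠ Finset.univ)
    (u : Ω → ℝ)
    (hu : ∃ ω₁ ∉ E, ∃ ω₂ ∉ E, u ω₁ ≠ u ω₂)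
    (β : ℝ) (hβ : ∀ ω, β < u ω) :
    ∃ α : ℝ, 0 < α ∧ α < 1 ∧ ∃ A B C : Ω → ℝ, IsDist A ∧ IsDist B ∧ IsDist C ∧
      riskPhi E u β (mix α A C) ≤ riskPhi E u β (mix α B C) ∧
      ¬ riskPhi E u β A ≤ riskPhi E u β B := by
  classical
  obtain ⟨x₁, hx₁, x₂, hx₂, hxu⟩ := hu
  obtain ⟨e, he⟩ := hE
  -- arrange u ω₂ < u ω₁
  obtain ⟨ω₁, hω₁, ω₂, hω₂, hlt⟩ :
      ∃ ω₁ ∉ E, ∃ ω₂ ∉ E, u ω₂ < u ω₁ := by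
    rcases lt_or_gt_of_ne hxu with h | h
    · exact ⟨x₂, hx₂, x₁, hx₁, h⟩
    · exact ⟨x₁, hx₁, x₂, hx₂, h⟩
  refine ⟨1/2, by norm_num, by norm_num,
    (fun x => if x = ω₁ then (1:ℝ) else 0),
    (fun x => if x = ω₂ then (1:ℝ) else 0),
    (fun x => if x = e then (1:ℝ) else 0),
    delta_isDist ω₁, delta_isDist ω₂, delta_isDist e, ?_, ?_⟩
  · have hmix : ∀ a : Ω, a ∉ E →
        (∑ ω ∈ E, mix (1/2) (fun x => if x = a then (1:ℝ) else 0)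
          (fun x => if x = e then (1:ℝ) else 0) ω) = 1/2 := by
      intro a ha
      simp only [mix, Finset.sum_add_distrib, ← Finset.mul_sum,
        Finset.sum_ite_eq' E a (fun _ => (1:ℝ)),
        Finset.sum_ite_eq' E e (fun _ => (1:ℝ))]
      simp [ha, he]
      norm_num
    have h1 := hmix ω₁ hω₁
    have h2 := hmix ω₂ hω₂
    rw [riskPhi, riskPhi, if_neg (by rw [h1]; norm_num),
      if_neg (by rw [h2]; norm_num), h1, h2]
  · rw [phi_delta E u β ω₁ hω₁, phi_delta E u β ω₂ hω₂]
    exact not_le.mpr hlt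
end

section
/- (von Neumann–Morgenstern, finite case) Let X be a finite nonempty set and ≼ a binary relation on Dist(X). Then ≼ is a total convex preorder satisfying interpolation if and only if there exists u: X → ℝ such that for all A,B ∈ Dist(X), A ≼ B ⟺ Σ_x u(x)A(x) ≤ Σ_x u(x)B(x). -/
open Finset

/-- Expected value of `u` under `A`. -/
def expVal {X : Type*} [Fintype X] (u : X → ℝ) (A : X → ℝ) : ℝ := ∑ x, u x * A x

namespace VNMAux

variable {X : Type*} [Fintype X]

open Classical in
/-- Dirac distribution at `a`. -/
noncomputable def dirac (a : X) : X → ℝ := fun x => if x = a then 1 else 0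

lemma dirac_isDist (a : X) : IsDist (dirac a) := by
  classical
  constructor
  · intro x
    unfold dirac
    split <;> norm_num
  · unfold dirac
    simp

lemma mix_isDist {α : ℝ} (h0 : 0 ≤ α) (h1 : α ≤ 1) {A B : X → ℝ}
    (hA : IsDist A) (hB : IsDist B) : IsDist (mix α A B) := by
  constructor
  · intro x
    have := hA.1 x; have := hB.1 x
    unfold mix; nlinarith
  · unfold mix
    rw [Finset.sum_add_distrib, ← Finset.mul_sum, ← Finset.mul_sum, hA.2, hB.2]; ring

lemma mix_self (α : ℝ) (A : X → ℝ) : mix α A A = A := by funext x; unfold mix; ring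
lemma mix_one (A B : X → ℝ) : mix 1 A B = A := by funext x; unfold mix; ring
lemma mix_zero (A B : X → ℝ) : mix 0 A B = B := by funext x; unfold mix; ring
lemma mix_comm (α : ℝ) (A B : X → ℝ) : mix α A B = mix (1 - α) B A := by
  funext x; unfold mix; ring

lemma expVal_mix (u : X → ℝ) (α : ℝ) (A B : X → ℝ) :
    expVal u (mix α A B) = α * expVal u A + (1 - α) * expVal u B := by
  unfold expVal mix
  rw [Finset.mul_sum, Finset.mul_sum, ← Finset.sum_add_distrib]
  exact Finset.sum_congr rfl (fun x _ => by ring)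

lemma expVal_dirac (u : X → ℝ) (a : X) : expVal u (dirac a) = u a := by
  classical
  unfold expVal dirac
  simp

lemma expVal_bounds {u : X → ℝ} (h0 : ∀ x, 0 ≤ u x) (h1 : ∀ x, u x ≤ 1)
    {A : X → ℝ} (hA : IsDist A) : 0 ≤ expVal u A ∧ expVal u A ≤ 1 := by
  constructor
  · exact Finset.sum_nonneg (fun x _ => mul_nonneg (h0 x) (hA.1 x))
  · calc expVal u A ≤ ∑ x, A x :=
          Finset.sum_le_sum (fun x _ => by nlinarith [h0 x, h1 x, hA.1 x])
      _ = 1 := hA.2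

section Rel

variable {R : (X → ℝ) → (X → ℝ) → Prop}

/-- Independence gives monotone mixing (weak version, endpoints included). -/
lemma ind_le (hrefl : ∀ A, IsDist A → R A A)
    (hind : ∀ α : ℝ, 0 < α → α < 1 → ∀ A B C, IsDist A → IsDist B → IsDist C →
      (R A B ↔ R (mix α A C) (mix α B C)))
    {α : ℝ} (h0 : 0 ≤ α) (h1 : α ≤ 1) {A B C : X → ℝ}
    (hA : IsDist A) (hB : IsDist B) (hC : IsDist C) (hAB : R A B) :
    R (mix α A C) (mix α B C) := by
  rcases eq_or_lt_of_le h0 with h | h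
  · rw [← h, mix_zero, mix_zero]; exact hrefl C hC
  rcases eq_or_lt_of_le h1 with h' | h'
  · rw [h', mix_one, mix_one]; exact hAB
  · exact (hind α h h' A B C hA hB hC).mp hAB

lemma ind_le' (hrefl : ∀ A, IsDist A → R A A)
    (hind : ∀ α : ℝ, 0 < α → α < 1 → ∀ A B C, IsDist A → IsDist B → IsDist C →
      (R A B ↔ R (mix α A C) (mix α B C)))
    {α : ℝ} (h0 : 0 ≤ α) (h1 : α ≤ 1) {A B C : X → ℝ}
    (hA : IsDist A) (hB : IsDist B) (hC : IsDist C) (hAB : R A B) :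
    R (mix α C A) (mix α C B) := by
  rw [mix_comm α C A, mix_comm α C B]
  exact ind_le hrefl hind (by linarith) (by linarith) hA hB hC hAB

lemma mix_le_of_le (hrefl : ∀ A, IsDist A → R A A)
    (htrans : ∀ A B C, IsDist A → IsDist B → IsDist C → R A B → R B C → R A C)
    (hind : ∀ α : ℝ, 0 < α → α < 1 → ∀ A B C, IsDist A → IsDist B → IsDist C →
      (R A B ↔ R (mix α A C) (mix α B C)))
    {p : ℝ} (h0 : 0 ≤ p) (h1 : p ≤ 1) {P Q M : X → ℝ}
    (hP : IsDist P) (hQ : IsDist Q) (hM : IsDist M)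
    (hPM : R P M) (hQM : R Q M) : R (mix p P Q) M := by
  have s1 : R (mix p P Q) (mix p M Q) := ind_le hrefl hind h0 h1 hP hM hQ hPM
  have s2 : R (mix p M Q) (mix p M M) := ind_le' hrefl hind h0 h1 hQ hM hM hQM
  rw [mix_self] at s2
  exact htrans _ _ _ (mix_isDist h0 h1 hP hQ) (mix_isDist h0 h1 hM hQ) hM s1 s2

lemma le_mix_of_le (hrefl : ∀ A, IsDist A → R A A)
    (htrans : ∀ A B C, IsDist A → IsDist B → IsDist C → R A B → R B C → R A C)
    (hind : ∀ α : ℝ, 0 < α → α < 1 → ∀ A B C, IsDist A → IsDist B → IsDist C →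
      (R A B ↔ R (mix α A C) (mix α B C)))
    {p : ℝ} (h0 : 0 ≤ p) (h1 : p ≤ 1) {P Q m : X → ℝ}
    (hP : IsDist P) (hQ : IsDist Q) (hm : IsDist m)
    (hmP : R m P) (hmQ : R m Q) : R m (mix p P Q) := by
  have s1 : R (mix p m m) (mix p P m) := ind_le hrefl hind h0 h1 hm hP hm hmP
  have s2 : R (mix p P m) (mix p P Q) := ind_le' hrefl hind h0 h1 hm hQ hP hmQ
  rw [mix_self] at s1
  exact htrans _ _ _ hm (mix_isDist h0 h1 hP hm) (mix_isDist h0 h1 hP hQ) s1 s2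

lemma mix_mono (hrefl : ∀ A, IsDist A → R A A)
    (htrans : ∀ A B C, IsDist A → IsDist B → IsDist C → R A B → R B C → R A C)
    (hind : ∀ α : ℝ, 0 < α → α < 1 → ∀ A B C, IsDist A → IsDist B → IsDist C →
      (R A B ↔ R (mix α A C) (mix α B C)))
    {β α : ℝ} (hβ0 : 0 ≤ β) (hle : β ≤ α) (hα1 : α ≤ 1)
    {M m : X → ℝ} (hM : IsDist M) (hm : IsDist m) (hmM : R m M) :
    R (mix β M m) (mix α M m) := by
  rcases eq_or_lt_of_le (le_trans hle hα1) with hb1 | hb1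
  · have hα : α = 1 := le_antisymm hα1 (hb1 ▸ hle)
    rw [hb1, hα]
    exact hrefl _ (mix_isDist (by norm_num) (by norm_num) hM hm)
  · have hb : (0:ℝ) < 1 - β := by linarith
    have hγ0 : 0 ≤ (α - β) / (1 - β) := div_nonneg (by linarith) hb.le
    have hγ1 : (α - β) / (1 - β) ≤ 1 := by rw [div_le_one hb]; linarith
    have hCd : IsDist (mix β M m) := mix_isDist hβ0 hb1.le hM hm
    have key : mix α M m = mix ((α - β) / (1 - β)) M (mix β M m) := by
      funext x; unfold mix; field_simp; ring
    have h1 : R (mix β M m) M := mix_le_of_le hrefl htrans hind hβ0 hb1.le hM hm hM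
      (hrefl M hM) hmM
    have h2 : R (mix ((α - β) / (1 - β)) (mix β M m) (mix β M m))
        (mix ((α - β) / (1 - β)) M (mix β M m)) :=
      ind_le hrefl hind hγ0 hγ1 hCd hM hCd h1
    rw [mix_self] at h2
    rw [key]
    exact h2

lemma mix_rev
    (hind : ∀ α : ℝ, 0 < α → α < 1 → ∀ A B C, IsDist A → IsDist B → IsDist C →
      (R A B ↔ R (mix α A C) (mix α B C)))
    {β α : ℝ} (hβ0 : 0 ≤ β) (hlt : β < α) (hα1 : α ≤ 1)
    {M m : X → ℝ} (hM : IsDist M) (hm : IsDist m)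
    (h : R (mix α M m) (mix β M m)) : R M m := by
  have hβ1 : β < 1 := lt_of_lt_of_le hlt hα1
  have hb : (0:ℝ) < 1 - β := by linarith
  have hCd : IsDist (mix β M m) := mix_isDist hβ0 hβ1.le hM hm
  have s1 : R M (mix β M m) := by
    rcases eq_or_lt_of_le hα1 with h1 | h1
    · rw [h1, mix_one] at h; exact h
    · have hγ0 : 0 < (α - β) / (1 - β) := div_pos (by linarith) hb
      have hγ1 : (α - β) / (1 - β) < 1 := by rw [div_lt_one hb]; linarith
      have key : mix α M m = mix ((α - β) / (1 - β)) M (mix β M m) := by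
        funext x; unfold mix; field_simp; ring
      have h' : R (mix ((α - β) / (1 - β)) M (mix β M m))
          (mix ((α - β) / (1 - β)) (mix β M m) (mix β M m)) := by
        rw [mix_self, ← key]; exact h
      exact (hind _ hγ0 hγ1 M (mix β M m) (mix β M m) hM hCd hCd).mpr h'
  rcases eq_or_lt_of_le hβ0 with h0 | h0
  · rw [← h0, mix_zero] at s1; exact s1
  · have key3 : mix β M m = mix (1 - β) m M := mix_comm β M m
    have h'' : R (mix (1 - β) M M) (mix (1 - β) m M) := by
      rw [mix_self, ← key3]; exact s1
    exact (hind (1 - β) (by linarith) (by linarith) M m M hM hm hM).mpr h''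

lemma cal_mix (hrefl : ∀ A, IsDist A → R A A)
    (htrans : ∀ A B C, IsDist A → IsDist B → IsDist C → R A B → R B C → R A C)
    (hind : ∀ α : ℝ, 0 < α → α < 1 → ∀ A B C, IsDist A → IsDist B → IsDist C →
      (R A B ↔ R (mix α A C) (mix α B C)))
    {p q α : ℝ} (hp0 : 0 ≤ p) (hp1 : p ≤ 1) (hq0 : 0 ≤ q) (hq1 : q ≤ 1)
    (hα0 : 0 ≤ α) (hα1 : α ≤ 1)
    {P Q M m : X → ℝ} (hP : IsDist P) (hQ : IsDist Q) (hM : IsDist M) (hm : IsDist m)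
    (hPc : R P (mix p M m)) (hcP : R (mix p M m) P)
    (hQc : R Q (mix q M m)) (hcQ : R (mix q M m) Q) :
    R (mix α P Q) (mix (α * p + (1 - α) * q) M m) ∧
      R (mix (α * p + (1 - α) * q) M m) (mix α P Q) := by
  have hd1 : IsDist (mix p M m) := mix_isDist hp0 hp1 hM hm
  have hd2 : IsDist (mix q M m) := mix_isDist hq0 hq1 hM hm
  have key : mix α (mix p M m) (mix q M m) = mix (α * p + (1 - α) * q) M m := by
    funext x; unfold mix; ring
  have dPQ : IsDist (mix α P Q) := mix_isDist hα0 hα1 hP hQ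
  have d1Q : IsDist (mix α (mix p M m) Q) := mix_isDist hα0 hα1 hd1 hQ
  have d12 : IsDist (mix α (mix p M m) (mix q M m)) := mix_isDist hα0 hα1 hd1 hd2
  constructor
  · have s1 : R (mix α P Q) (mix α (mix p M m) Q) := ind_le hrefl hind hα0 hα1 hP hd1 hQ hPc
    have s2 : R (mix α (mix p M m) Q) (mix α (mix p M m) (mix q M m)) :=
      ind_le' hrefl hind hα0 hα1 hQ hd2 hd1 hQc
    have := htrans _ _ _ dPQ d1Q d12 s1 s2
    rw [key] at this; exact this
  · have s1 : R (mix α (mix p M m) Q) (mix α P Q) := ind_le hrefl hind hα0 hα1 hd1 hP hQ hcP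
    have s2 : R (mix α (mix p M m) (mix q M m)) (mix α (mix p M m) Q) :=
      ind_le' hrefl hind hα0 hα1 hd2 hQ hd1 hcQ
    have := htrans _ _ _ d12 d1Q dPQ s2 s1
    rw [key] at this; exact this

lemma exists_top (hrefl : ∀ A, IsDist A → R A A)
    (htrans : ∀ A B C, IsDist A → IsDist B → IsDist C → R A B → R B C → R A C)
    (htot : ∀ A B, IsDist A → IsDist B → (R A B ∨ R B A)) [Nonempty X] :
    ∃ a : X, ∀ x : X, R (dirac x) (dirac a) := by
  classical
  have main : ∀ s : Finset X, s.Nonempty → ∃ a ∈ s, ∀ x ∈ s, R (dirac x) (dirac a) := by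
    intro s
    induction s using Finset.induction_on with
    | empty => intro h; simp at h
    | @insert a t hat ih =>
      intro _
      rcases t.eq_empty_or_nonempty with rfl | ht
      · refine ⟨a, mem_insert_self a _, ?_⟩
        intro x hx
        simp only [mem_insert, Finset.notMem_empty, or_false] at hx
        subst hx
        exact hrefl _ (dirac_isDist _)
      · obtain ⟨b, hb, hmax⟩ := ih ht
        rcases htot (dirac a) (dirac b) (dirac_isDist a) (dirac_isDist b) with h | h
        · refine ⟨b, mem_insert_of_mem hb, ?_⟩
          intro x hx
          rcases mem_insert.mp hx with rfl | hx
          · exact h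
          · exact hmax x hx
        · refine ⟨a, mem_insert_self a _, ?_⟩
          intro x hx
          rcases mem_insert.mp hx with rfl | hx
          · exact hrefl _ (dirac_isDist x)
          · exact htrans _ _ _ (dirac_isDist x) (dirac_isDist b) (dirac_isDist a)
              (hmax x hx) h
  obtain ⟨a, _, h⟩ := main univ univ_nonempty
  exact ⟨a, fun x => h x (mem_univ x)⟩

end Rel

lemma dirac_induction (Φ : (X → ℝ) → Prop)
    (hd : ∀ x, Φ (dirac x))
    (hmix : ∀ p : ℝ, 0 ≤ p → p ≤ 1 → ∀ A B, IsDist A → IsDist B → Φ A → Φ B →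
      Φ (mix p A B)) :
    ∀ A, IsDist A → Φ A := by
  classical
  have main : ∀ s : Finset X, ∀ A, IsDist A → (∀ x ∉ s, A x = 0) → Φ A := by
    intro s
    induction s using Finset.induction_on with
    | empty =>
      intro A hA hsupp
      exfalso
      have h0 : ∑ x, A x = 0 :=
        Finset.sum_eq_zero (fun x _ => hsupp x (Finset.notMem_empty x))
      rw [hA.2] at h0; norm_num at h0
    | @insert a t hat ih =>
      intro A hA hsupp
      have hp0 : 0 ≤ A a := hA.1 a
      have hp1 : A a ≤ 1 := by
        rw [← hA.2]
        exact Finset.single_le_sum (fun x _ => hA.1 x) (mem_univ a)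
      have hsum : ∑ y ∈ univ.erase a, A y = 1 - A a := by
        have h := Finset.add_sum_erase univ A (mem_univ a)
        rw [hA.2] at h; linarith
      rcases eq_or_lt_of_le hp1 with h1 | h1
      · have hz : ∀ x, x ≠ a → A x = 0 := by
          intro x hx
          have hzero : ∑ y ∈ univ.erase a, A y = 0 := by rw [hsum, ← h1]; ring
          exact (Finset.sum_eq_zero_iff_of_nonneg (fun y _ => hA.1 y)).mp hzero x
            (mem_erase.mpr ⟨hx, mem_univ x⟩)
        have hAd : A = dirac a := by
          funext x
          by_cases hx : x = a
          · subst hx; unfold dirac; simp [← h1]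
          · unfold dirac; simp [hx, hz x hx]
        rw [hAd]; exact hd a
      · have hne : (1 : ℝ) - A a ≠ 0 := by linarith
        set B : X → ℝ := fun x => if x = a then 0 else A x / (1 - A a) with hB
        have hBsupp : ∀ x ∉ t, B x = 0 := by
          intro x hx
          by_cases hxa : x = a
          · simp [hB, hxa]
          · have hxs : x ∉ insert a t := by simp [hxa, hx]
            simp [hB, hxa, hsupp x hxs]
        have hBd : IsDist B := by
          constructor
          · intro x
            by_cases hxa : x = a
            · simp [hB, hxa]
            · simp only [hB, hxa, if_false]
              exact div_nonneg (hA.1 x) (by linarith)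
          · calc ∑ x, B x = ∑ x ∈ univ.erase a, B x := by
                  rw [← Finset.add_sum_erase univ B (mem_univ a)]
                  simp [hB]
              _ = ∑ x ∈ univ.erase a, A x / (1 - A a) := by
                  refine Finset.sum_congr rfl (fun x hx => ?_)
                  simp [hB, (mem_erase.mp hx).1]
              _ = (∑ x ∈ univ.erase a, A x) / (1 - A a) := by rw [Finset.sum_div]
              _ = 1 := by rw [hsum]; field_simp
        have hAeq : A = mix (A a) (dirac a) B := by
          funext x
          by_cases hxa : x = a
          · subst hxa; simp [mix, dirac, hB]
          · simp only [mix, dirac, hB, hxa, if_false]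
            field_simp
            ring
        rw [hAeq]
        exact hmix (A a) hp0 h1.le (dirac a) B (dirac_isDist a) hBd (hd a)
          (ih B hBd hBsupp)
  intro A hA
  exact main univ A hA (fun x hx => absurd (mem_univ x) hx)

end VNMAux

open VNMAux

/-- von Neumann–Morgenstern, finite case. -/
theorem vnm_expected_utility {X : Type*} [Fintype X] [Nonempty X]
    (R : (X → ℝ) → (X → ℝ) → Prop) :
    ((∀ A, IsDist A → R A A) ∧
     (∀ A B C, IsDist A → IsDist B → IsDist C → R A B → R B C → R A C) ∧
     (∀ A B, IsDist A → IsDist B → (R A B ∨ R B A)) ∧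
     (∀ α : ℝ, 0 < α → α < 1 → ∀ A B C, IsDist A → IsDist B → IsDist C →
       (R A B ↔ R (mix α A C) (mix α B C))) ∧
     (∀ A B C, IsDist A → IsDist B → IsDist C → R A B → R B C →
       ∃ α : ℝ, 0 ≤ α ∧ α ≤ 1 ∧ R (mix α A C) B ∧ R B (mix α A C)))
    ↔ (∃ u : X → ℝ, ∀ A B, IsDist A → IsDist B → (R A B ↔ expVal u A ≤ expVal u B)) := by
  constructor
  · rintro ⟨hrefl, htrans, htot, hind, hint⟩
    obtain ⟨aM, htopd⟩ := exists_top hrefl htrans htot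
    obtain ⟨am, hbotd⟩ := exists_top (R := fun A B => R B A) hrefl
      (fun A B C hA hB hC h1 h2 => htrans C B A hC hB hA h2 h1)
      (fun A B hA hB => (htot B A hB hA))
    set M := dirac aM with hMdef
    set m := dirac am with hmdef
    have hM : IsDist M := dirac_isDist aM
    have hm : IsDist m := dirac_isDist am
    have htop : ∀ A, IsDist A → R A M :=
      dirac_induction (fun A => R A M) htopd
        (fun p hp0 hp1 A B hA hB hPA hPB =>
          mix_le_of_le hrefl htrans hind hp0 hp1 hA hB hM hPA hPB)
    have hbot : ∀ A, IsDist A → R m A :=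
      dirac_induction (fun A => R m A) hbotd
        (fun p hp0 hp1 A B hA hB hPA hPB =>
          le_mix_of_le hrefl htrans hind hp0 hp1 hA hB hm hPA hPB)
    have hmM : R m M := hbotd aM
    by_cases hMm : R M m
    · refine ⟨0, fun A B hA hB => ?_⟩
      have e : ∀ C : X → ℝ, expVal (0 : X → ℝ) C = 0 := fun C => by simp [expVal]
      constructor
      · intro _; rw [e, e]
      · intro _
        exact htrans A M B hA hM hB (htop A hA)
          (htrans M m B hM hm hB hMm (hbot B hB))
    · have hchoice : ∀ x : X, ∃ α : ℝ, 0 ≤ α ∧ α ≤ 1 ∧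
          R (mix α M m) (dirac x) ∧ R (dirac x) (mix α M m) := by
        intro x
        obtain ⟨α, h0, h1, h2, h3⟩ := hint m (dirac x) M hm (dirac_isDist x) hM
          (hbot (dirac x) (dirac_isDist x)) (htop (dirac x) (dirac_isDist x))
        have hflip : mix (1 - α) M m = mix α m M := by
          funext y; unfold mix; ring
        exact ⟨1 - α, by linarith, by linarith, by rw [hflip]; exact h2,
          by rw [hflip]; exact h3⟩
      choose u hu0 hu1 hu2 hu3 using hchoice
      have hcal : ∀ A, IsDist A →
          (R A (mix (expVal u A) M m) ∧ R (mix (expVal u A) M m) A) := by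
        apply dirac_induction
        · intro x
          rw [expVal_dirac]
          exact ⟨hu3 x, hu2 x⟩
        · intro p hp0 hp1 A B hA hB hPA hPB
          have hbA := expVal_bounds hu0 hu1 hA
          have hbB := expVal_bounds hu0 hu1 hB
          have := cal_mix hrefl htrans hind hbA.1 hbA.2 hbB.1 hbB.2 hp0 hp1
            hA hB hM hm hPA.1 hPA.2 hPB.1 hPB.2
          rw [expVal_mix]
          exact this
      refine ⟨u, fun A B hA hB => ?_⟩
      have hbA := expVal_bounds hu0 hu1 hA
      have hbB := expVal_bounds hu0 hu1 hB
      have hdA : IsDist (mix (expVal u A) M m) := mix_isDist hbA.1 hbA.2 hM hm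
      have hdB : IsDist (mix (expVal u B) M m) := mix_isDist hbB.1 hbB.2 hM hm
      constructor
      · intro hAB
        by_contra hlt
        push_neg at hlt
        have chain : R (mix (expVal u A) M m) (mix (expVal u B) M m) :=
          htrans _ A _ hdA hA hdB (hcal A hA).2
            (htrans A B _ hA hB hdB hAB (hcal B hB).1)
        exact hMm (mix_rev hind hbB.1 hlt hbA.2 hM hm chain)
      · intro hle
        have hmono : R (mix (expVal u A) M m) (mix (expVal u B) M m) :=
          mix_mono hrefl htrans hind hbA.1 hle hbB.2 hM hm hmM
        exact htrans A _ B hA hdA hB (hcal A hA).1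
          (htrans _ _ B hdA hdB hB hmono (hcal B hB).2)
  · rintro ⟨u, hu⟩
    refine ⟨?_, ?_, ?_, ?_, ?_⟩
    · intro A hA; exact (hu A A hA hA).mpr le_rfl
    · intro A B C hA hB hC h1 h2
      exact (hu A C hA hC).mpr (le_trans ((hu A B hA hB).mp h1) ((hu B C hB hC).mp h2))
    · intro A B hA hB
      rcases le_total (expVal u A) (expVal u B) with h | h
      · exact Or.inl ((hu A B hA hB).mpr h)
      · exact Or.inr ((hu B A hB hA).mpr h)
    · intro α h0 h1 A B C hA hB hC
      have hACd := mix_isDist h0.le h1.le hA hC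
      have hBCd := mix_isDist h0.le h1.le hB hC
      rw [hu A B hA hB, hu _ _ hACd hBCd, expVal_mix, expVal_mix]
      constructor
      · intro h
        nlinarith [mul_le_mul_of_nonneg_left h h0.le]
      · intro h
        have h' : α * expVal u A ≤ α * expVal u B := by linarith
        exact (mul_le_mul_iff_right₀ h0).mp h' 
    · intro A B C hA hB hC h1 h2
      have e1 := (hu A B hA hB).mp h1
      have e2 := (hu B C hB hC).mp h2
      rcases eq_or_lt_of_le (le_trans e1 e2) with heq | hlt
      · refine ⟨1, by norm_num, le_rfl, ?_, ?_⟩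
        · rw [mix_one]; exact h1
        · rw [mix_one]
          exact (hu B A hB hA).mpr (by rw [← heq] at e2; linarith)
      · have hd : 0 < expVal u C - expVal u A := by linarith
        have hne : expVal u C - expVal u A ≠ 0 := hd.ne'
        have hα0 : 0 ≤ (expVal u C - expVal u B) / (expVal u C - expVal u A) :=
          div_nonneg (by linarith) hd.le
        have hα1 : (expVal u C - expVal u B) / (expVal u C - expVal u A) ≤ 1 := by
          rw [div_le_one hd]; linarith
        have hmixd := mix_isDist hα0 hα1 hA hC
        have hval : expVal u
            (mix ((expVal u C - expVal u B) / (expVal u C - expVal u A)) A C)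
            = expVal u B := by
          rw [expVal_mix]; field_simp; ring
        exact ⟨_, hα0, hα1, (hu _ B hmixd hB).mpr (le_of_eq hval),
          (hu B _ hB hmixd).mpr (le_of_eq hval.symm)⟩
end

section
/- Let X be a finite set and u, v: X → ℝ two functions that both represent the same total preorder ≼ on Dist(X) via expected value (A ≼ B ⟺ 𝔼_A[u] ≤ 𝔼_B[u] ⟺ 𝔼_A[v] ≤ 𝔼_B[v]). Then there exist real numbers a > 0 and b such that v = a·u + b, provided u is non-constant. -/
open Finset

/-- Dirac distribution at a point. -/
def dirac {X : Type*} [DecidableEq X] (x : X) : X → ℝ := fun y => if y = x then 1 else 0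

lemma dirac_isDist {X : Type*} [Fintype X] [DecidableEq X] (x : X) : IsDist (dirac x) := by
  constructor
  · intro y; unfold dirac; split <;> norm_num
  · simp [dirac]

lemma expVal_dirac {X : Type*} [Fintype X] [DecidableEq X] (u : X → ℝ) (x : X) :
    expVal u (dirac x) = u x := by
  simp [expVal, dirac, mul_ite]

lemma mix_isDist {X : Type*} [Fintype X] {α : ℝ} (h0 : 0 ≤ α) (h1 : α ≤ 1)
    {A B : X → ℝ} (hA : IsDist A) (hB : IsDist B) : IsDist (mix α A B) := by
  constructor
  · intro x
    have := hA.1 x; have := hB.1 x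
    have : 0 ≤ 1 - α := by linarith
    unfold mix; positivity
  · unfold mix
    rw [Finset.sum_add_distrib, ← Finset.mul_sum, ← Finset.mul_sum, hA.2, hB.2]
    ring

lemma expVal_mix {X : Type*} [Fintype X] (u : X → ℝ) (α : ℝ) (A B : X → ℝ) :
    expVal u (mix α A B) = α * expVal u A + (1 - α) * expVal u B := by
  unfold expVal mix
  rw [Finset.mul_sum, Finset.mul_sum, ← Finset.sum_add_distrib]
  exact Finset.sum_congr rfl fun x _ => by ring

/-- vNM uniqueness up to positive affine transformation. -/
theorem vnm_uniqueness {X : Type*} [Fintype X] [Nonempty X]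
    (u v : X → ℝ)
    (hrep : ∀ A B : X → ℝ, IsDist A → IsDist B →
      (expVal u A ≤ expVal u B ↔ expVal v A ≤ expVal v B))
    (hu : ∃ x y, u x ≠ u y) :
    ∃ a b : ℝ, 0 < a ∧ ∀ x, v x = a * u x + b := by
  classical
  -- equality transfer
  have heq : ∀ A B : X → ℝ, IsDist A → IsDist B →
      expVal u A = expVal u B → expVal v A = expVal v B := by
    intro A B hA hB h
    have h1 := (hrep A B hA hB).mp h.le
    have h2 := (hrep B A hB hA).mp h.ge
    linarith
  obtain ⟨xm, -, hxm⟩ := Finset.exists_min_image (Finset.univ : Finset X) u ⟨Classical.arbitrary X, Finset.mem_univ _⟩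
  obtain ⟨xM, -, hxM⟩ := Finset.exists_max_image (Finset.univ : Finset X) u ⟨Classical.arbitrary X, Finset.mem_univ _⟩
  have hmM : u xm < u xM := by
    obtain ⟨x, y, hxy⟩ := hu
    rcases lt_or_ge (u xm) (u xM) with h | h
    · exact h
    · exfalso
      have h1 := hxm x (Finset.mem_univ x)
      have h2 := hxM x (Finset.mem_univ x)
      have h3 := hxm y (Finset.mem_univ y)
      have h4 := hxM y (Finset.mem_univ y)
      apply hxy; linarith
  have hvmM : v xm < v xM := by
    have := hrep (dirac xM) (dirac xm) (dirac_isDist _) (dirac_isDist _)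
    rw [expVal_dirac, expVal_dirac, expVal_dirac, expVal_dirac] at this
    by_contra h
    push_neg at h
    have := this.mpr h
    linarith
  have hMm : u xM - u xm ≠ 0 := by linarith
  set a : ℝ := (v xM - v xm) / (u xM - u xm) with ha
  refine ⟨a, v xm - a * u xm, by apply div_pos <;> linarith, ?_⟩
  intro x
  set t : ℝ := (u x - u xm) / (u xM - u xm) with ht
  have ht0 : 0 ≤ t := by
    apply div_nonneg
    · have := hxm x (Finset.mem_univ x); linarith
    · linarith
  have ht1 : t ≤ 1 := by
    rw [div_le_one (by linarith)]
    have := hxM x (Finset.mem_univ x); linarith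
  have hdist := mix_isDist ht0 ht1 (dirac_isDist (X := X) xM) (dirac_isDist xm)
  have hueq : expVal u (mix t (dirac xM) (dirac xm)) = expVal u (dirac x) := by
    rw [expVal_mix, expVal_dirac, expVal_dirac, expVal_dirac, ht]
    field_simp
    ring
  have hveq := heq _ _ hdist (dirac_isDist x) hueq
  rw [expVal_mix, expVal_dirac, expVal_dirac, expVal_dirac] at hveq
  rw [← hveq, ht, ha]
  field_simp
  ring
end

section
/- There exists a Direct Preference Process (𝒪, 𝒜, T, e, ≼) with ≼ a total preorder on Dist(Ω) for which no optimal policy exists. Concretely, with 𝒪 = {o⁰,o¹}, 𝒜 = {a⁰,a¹}, T = 2, uniform transition probabilities ρ(o | h,a) = 1/2, initial observation o⁰, and φ(A) = Σ_ω A(ω)·u(ω;a¹) if supp(A) ⊆ Cyl(h₁⁰) and φ(A) = −Σ_ω A(ω)·u(ω;a¹) otherwise (where u(ω;a¹) counts occurrences of a¹ in ω and h₁⁰ = (o⁰,a⁰,o⁰)), the total preorder A ≼_φ B ⟺ φ(A) ≤ φ(B) admits no ≼_φ-optimal policy. -/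
open Finset

/-- A history: an initial observation together with a list of action-observation pairs. -/
abbrev Hist (O A : Type*) := O × List (A × O)

/-- The length (time index) of a history. -/
def hlen {O A : Type*} (h : Hist O A) : ℕ := h.2.length

/-- Append an action-observation pair to a history. -/
def hext {O A : Type*} (h : Hist O A) (a : A) (o : O) : Hist O A :=
  (h.1, h.2 ++ [(a, o)])

/-- The length-`t` prefix of a history/trajectory. -/
def hpre {O A : Type*} (h : Hist O A) (t : ℕ) : Hist O A := (h.1, h.2.take t)

section DPP

variable {O A : Type*} [Fintype O] [Fintype A] [DecidableEq O] [DecidableEq A]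

/-- The finite set of all length-`T` histories (trajectories). -/
def trajFinset (O A : Type*) [Fintype O] [Fintype A] [DecidableEq O] [DecidableEq A]
    (T : ℕ) : Finset (Hist O A) :=
  Finset.image (fun p : O × (Fin T → A × O) => ((p.1, List.ofFn p.2) : Hist O A))
    Finset.univ

/-- `π` is a policy: a distribution over actions for each history. -/
def IsPolicy (π : Hist O A → A → ℝ) : Prop :=
  ∀ h, (∀ a, 0 ≤ π h a) ∧ ∑ a, π h a = 1

/-- `(ρ0, ρ)` is an environment: an initial observation distribution and
history-dependent transition probabilities. -/
def IsEnv (ρ0 : O → ℝ) (ρ : Hist O A → A → O → ℝ) : Prop :=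
  ((∀ o, 0 ≤ ρ0 o) ∧ ∑ o, ρ0 o = 1) ∧
    ∀ h a, (∀ o, 0 ≤ ρ h a o) ∧ ∑ o, ρ h a o = 1

/-- `Dpi ρ π n h` : the distribution over trajectories induced by starting at `h`
(with `n` steps remaining) and following policy `π` in environment `ρ`. -/
noncomputable def Dpi (ρ : Hist O A → A → O → ℝ) (π : Hist O A → A → ℝ) :
    ℕ → Hist O A → Hist O A → ℝ
  | 0, h, ω => if ω = h then 1 else 0
  | n + 1, h, ω => ∑ a, π h a * ∑ o, ρ h a o * Dpi ρ π n (hext h a o) ω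

/-- `D^π(h)` with horizon `T`. -/
noncomputable def DpiH (T : ℕ) (ρ : Hist O A → A → O → ℝ) (π : Hist O A → A → ℝ)
    (h : Hist O A) : Hist O A → ℝ :=
  Dpi ρ π (T - hlen h) h

/-- `D^π(h · a)` : take action `a` at `h`, then follow `π`. -/
noncomputable def DpiA (T : ℕ) (ρ : Hist O A → A → O → ℝ) (π : Hist O A → A → ℝ)
    (h : Hist O A) (a : A) : Hist O A → ℝ :=
  fun ω => ∑ o, ρ h a o * Dpi ρ π (T - hlen h - 1) (hext h a o) ω

/-- Attainable histories in environment `(ρ0, ρ)`. -/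
inductive Attainable (ρ0 : O → ℝ) (ρ : Hist O A → A → O → ℝ) : Hist O A → Prop
  | base (o : O) : 0 < ρ0 o → Attainable ρ0 ρ (o, ([] : List (A × O)))
  | step (h : Hist O A) (a : A) (o : O) :
      Attainable ρ0 ρ h → 0 < ρ h a o → Attainable ρ0 ρ (hext h a o)

/-- A distribution over trajectories (length-`T` histories). -/
def IsTrajDist (T : ℕ) (D : Hist O A → ℝ) : Prop :=
  (∀ ω, 0 ≤ D ω) ∧ (∀ ω, D ω ≠ 0 → hlen ω = T) ∧
    ∑ ω ∈ trajFinset O A T, D ω = 1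

/-- A distribution over the attainable trajectories `Ω^e`. -/
def IsAttDist (T : ℕ) (ρ0 : O → ℝ) (ρ : Hist O A → A → O → ℝ)
    (D : Hist O A → ℝ) : Prop :=
  IsTrajDist T D ∧ ∀ ω, D ω ≠ 0 → Attainable ρ0 ρ ω

/-- The restriction of `R` to `Dist(Ω^e)` is a total consistent preorder. -/
def RestrTotalConsistentPreorder (T : ℕ) (ρ0 : O → ℝ)
    (ρ : Hist O A → A → O → ℝ) (R : (Hist O A → ℝ) → (Hist O A → ℝ) → Prop) : Prop :=
  (∀ D, IsAttDist T ρ0 ρ D → R D D) ∧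
  (∀ D₁ D₂ D₃, IsAttDist T ρ0 ρ D₁ → IsAttDist T ρ0 ρ D₂ → IsAttDist T ρ0 ρ D₃ →
    R D₁ D₂ → R D₂ D₃ → R D₁ D₃) ∧
  (∀ D₁ D₂, IsAttDist T ρ0 ρ D₁ → IsAttDist T ρ0 ρ D₂ → (R D₁ D₂ ∨ R D₂ D₁)) ∧
  (∀ α : ℝ, 0 < α → α < 1 → ∀ D₁ D₂ D₃, IsAttDist T ρ0 ρ D₁ →
    IsAttDist T ρ0 ρ D₂ → IsAttDist T ρ0 ρ D₃ →
    R D₁ D₂ → R (mix α D₁ D₃) (mix α D₂ D₃))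

/-- `π` is a `≼`-optimal policy. -/
def OptimalPolicy (T : ℕ) (ρ0 : O → ℝ) (ρ : Hist O A → A → O → ℝ)
    (R : (Hist O A → ℝ) → (Hist O A → ℝ) → Prop) (π : Hist O A → A → ℝ) : Prop :=
  ∀ h, Attainable ρ0 ρ h → hlen h ≤ T →
    ∀ π', IsPolicy π' → R (DpiH T ρ π' h) (DpiH T ρ π h)

/-- The optimal action set of policy `π` at history `h`. -/
def OptActions (T : ℕ) (ρ : Hist O A → A → O → ℝ)
    (R : (Hist O A → ℝ) → (Hist O A → ℝ) → Prop) (π : Hist O A → A → ℝ)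
    (h : Hist O A) : Set A :=
  {a | ∀ a', R (DpiA T ρ π h a') (DpiA T ρ π h a)}

end DPP

/-- Number of occurrences of the action `a¹ = true` in a trajectory. -/
def countA1 (ω : Hist Bool Bool) : ℝ := ((ω.2.map Prod.fst).count true : ℝ)

/-- `ω` lies in the cylinder of `h₁⁰ = (o⁰, a⁰, o⁰)` (with `o⁰ = a⁰ = false`). -/
def inCyl (ω : Hist Bool Bool) : Prop :=
  ω.1 = false ∧ ω.2.take 1 = [(false, false)]

open Classical in
/-- The performance function of Proposition 12. -/
noncomputable def propPhi (D : Hist Bool Bool → ℝ) : ℝ :=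
  if ∀ ω, D ω ≠ 0 → inCyl ω then
    ∑ ω ∈ trajFinset Bool Bool 2, D ω * countA1 ω
  else
    -∑ ω ∈ trajFinset Bool Bool 2, D ω * countA1 ω
noncomputable abbrev rho : Hist Bool Bool → Bool → Bool → ℝ := fun _ _ _ => (1:ℝ)/2
abbrev h₀ : Hist Bool Bool := (false, [])
abbrev h₁ : Hist Bool Bool := (false, [(false,false)])

theorem sum_traj2 (f : Hist Bool Bool → ℝ) :
    ∑ ω ∈ trajFinset Bool Bool 2, f ω =
      ∑ p : Bool × ((Bool × Bool) × (Bool × Bool)), f (p.1, [p.2.1, p.2.2]) := by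
  rw [trajFinset, Finset.sum_image (by
    intro p _ q _ h
    simp only [Prod.mk.injEq, List.ofFn_inj] at h
    exact Prod.ext h.1 h.2)]
  exact Fintype.sum_equiv ((Equiv.refl Bool).prodCongr (finTwoArrowEquiv (Bool × Bool))) _ _
    (by intro p; simp [finTwoArrowEquiv, List.ofFn_succ])

theorem dpi_nonneg (π : Hist Bool Bool → Bool → ℝ) (hπ : IsPolicy π) (n : ℕ) :
    ∀ h ω, 0 ≤ Dpi rho π n h ω := by
  induction n with
  | zero => intro h ω; simp only [Dpi]; split <;> norm_num
  | succ n ih =>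
    intro h ω
    simp only [Dpi]
    refine Finset.sum_nonneg fun a _ => mul_nonneg ((hπ h).1 a) ?_
    exact Finset.sum_nonneg fun o _ => mul_nonneg (by norm_num) (ih _ _)

theorem countA1_nonneg (ω : Hist Bool Bool) : 0 ≤ countA1 ω := by
  unfold countA1; positivity

theorem dpi2_eval (π : Hist Bool Bool → Bool → ℝ) (a1 o1 a2 o2 : Bool) :
    Dpi rho π 2 h₀ (false,[(a1,o1),(a2,o2)]) =
      π h₀ a1 * π (false,[(a1,o1)]) a2 / 4 := by
  cases a1 <;> cases o1 <;> cases a2 <;> cases o2 <;>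
    (simp [Dpi, hext, Fintype.sum_bool]; try ring)


/-- a Direct Preference Process with a total preorder on
`Dist(Ω)` but no optimal policy. -/
theorem exists_dpp_without_optimal_policy :
    ¬ ∃ π : Hist Bool Bool → Bool → ℝ, IsPolicy π ∧
        OptimalPolicy 2 (fun o => if o = false then 1 else 0)
          (fun _ _ _ => (1 : ℝ) / 2)
          (fun D₁ D₂ => propPhi D₁ ≤ propPhi D₂) π := by
  rintro ⟨π, hπ, hopt⟩
  set cF : Hist Bool Bool → Bool → ℝ := fun _ a => if a = false then 1 else 0 with hcFdef
  set cT : Hist Bool Bool → Bool → ℝ := fun _ a => if a = true then 1 else 0 with hcTdef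
  have hcF : IsPolicy cF := by
    intro h; refine ⟨fun a => by cases a <;> simp [hcFdef], by simp [Fintype.sum_bool, hcFdef]⟩
  have hcT : IsPolicy cT := by
    intro h; refine ⟨fun a => by cases a <;> simp [hcTdef], by simp [Fintype.sum_bool, hcTdef]⟩
  have hAtt0 : Attainable (fun o => if o = false then (1:ℝ) else 0) rho h₀ :=
    Attainable.base false (by norm_num)
  -- step A: optimality at the root against the constant-a⁰ policy
  have step0 : propPhi (Dpi rho cF 2 h₀) ≤ propPhi (Dpi rho π 2 h₀) :=
    hopt h₀ hAtt0 (by norm_num [hlen]) cF hcF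
  have phiF : propPhi (Dpi rho cF 2 h₀) = 0 := by
    have hs : ∑ ω ∈ trajFinset Bool Bool 2, Dpi rho cF 2 h₀ ω * countA1 ω = 0 := by
      rw [sum_traj2]
      simp [Fintype.sum_prod_type, Fintype.sum_bool, Dpi, hext, countA1, hcFdef]
    unfold propPhi; split <;> simp [hs]
  have hphi0 : 0 ≤ propPhi (Dpi rho π 2 h₀) := phiF ▸ step0
  -- notation for the two second-step histories
  have hsum0 : π h₀ false + π h₀ true = 1 := by
    have := (hπ h₀).2; rwa [Fintype.sum_bool, add_comm] at this
  have hsumT : π (false,[(true,false)]) false + π (false,[(true,false)]) true = 1 := by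
    have := (hπ (false,[(true,false)])).2; rwa [Fintype.sum_bool, add_comm] at this
  have hsumF : π (false,[(false,true)]) false + π (false,[(false,true)]) true = 1 := by
    have := (hπ (false,[(false,true)])).2; rwa [Fintype.sum_bool, add_comm] at this
  have hsum1 : π h₁ false + π h₁ true = 1 := by
    have := (hπ h₁).2; rwa [Fintype.sum_bool, add_comm] at this
  -- derive: π h₀ true = 0 and π h₁ true = 0
  have key : π h₀ true = 0 ∧ π h₁ true = 0 := by
    by_cases hc : ∀ ω, Dpi rho π 2 h₀ ω ≠ 0 → inCyl ω
    · exfalso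
      have z1 : ∀ a, π h₀ true * π (false,[(true,false)]) a = 0 := by
        intro a
        have hd : Dpi rho π 2 h₀ (false,[(true,false),(a,false)]) = 0 := by
          by_contra h
          have := hc _ h
          simp [inCyl] at this
        rw [dpi2_eval] at hd; linarith
      have z2 : ∀ a, π h₀ false * π (false,[(false,true)]) a = 0 := by
        intro a
        have hd : Dpi rho π 2 h₀ (false,[(false,true),(a,false)]) = 0 := by
          by_contra h
          have := hc _ h
          simp [inCyl] at this
        rw [dpi2_eval] at hd; linarith
      have ht0 : π h₀ true = 0 := by
        have e : π h₀ true * (π (false,[(true,false)]) false + π (false,[(true,false)]) true) = 0 := by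
          rw [mul_add, z1 false, z1 true]; ring
        rw [hsumT, mul_one] at e; exact e
      have hf0 : π h₀ false = 0 := by
        have e : π h₀ false * (π (false,[(false,true)]) false + π (false,[(false,true)]) true) = 0 := by
          rw [mul_add, z2 false, z2 true]; ring
        rw [hsumF, mul_one] at e; exact e
      rw [ht0, hf0] at hsum0; norm_num at hsum0
    · have hneg : propPhi (Dpi rho π 2 h₀)
          = -∑ ω ∈ trajFinset Bool Bool 2, Dpi rho π 2 h₀ ω * countA1 ω := by
        unfold propPhi; rw [if_neg hc]
      have hnn : ∀ ω ∈ trajFinset Bool Bool 2, 0 ≤ Dpi rho π 2 h₀ ω * countA1 ω :=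
        fun ω _ => mul_nonneg (dpi_nonneg π hπ 2 _ _) (countA1_nonneg ω)
      have hs0 : ∑ ω ∈ trajFinset Bool Bool 2, Dpi rho π 2 h₀ ω * countA1 ω = 0 := by
        have hle : ∑ ω ∈ trajFinset Bool Bool 2, Dpi rho π 2 h₀ ω * countA1 ω ≤ 0 := by
          rw [hneg] at hphi0; linarith
        exact le_antisymm hle (Finset.sum_nonneg hnn)
      have hz := (Finset.sum_eq_zero_iff_of_nonneg hnn).1 hs0
      have z1 : ∀ a, π h₀ true * π (false,[(true,false)]) a = 0 := by
        intro a
        have hm : ((false,[(true,false),(a,false)]) : Hist Bool Bool) ∈ trajFinset Bool Bool 2 := by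
          cases a <;> decide
        have := hz _ hm
        rw [dpi2_eval] at this
        have hcnt : countA1 ((false,[(true,false),(a,false)]) : Hist Bool Bool) ≠ 0 := by
          cases a <;> norm_num [countA1]
        have := mul_eq_zero.1 this
        rcases this with h | h
        · linarith
        · exact absurd h hcnt
      have ht0 : π h₀ true = 0 := by
        have e : π h₀ true * (π (false,[(true,false)]) false + π (false,[(true,false)]) true) = 0 := by
          rw [mul_add, z1 false, z1 true]; ring
        rw [hsumT, mul_one] at e; exact e
      have hf1 : π h₀ false = 1 := by linarith
      have z3 : π h₀ false * π h₁ true = 0 := by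
        have hm : ((false,[(false,false),(true,false)]) : Hist Bool Bool) ∈ trajFinset Bool Bool 2 := by
          decide
        have := hz _ hm
        rw [dpi2_eval] at this
        have hcnt : countA1 ((false,[(false,false),(true,false)]) : Hist Bool Bool) ≠ 0 := by
          norm_num [countA1]
        rcases mul_eq_zero.1 this with h | h
        · linarith
        · exact absurd h hcnt
      rw [hf1, one_mul] at z3
      exact ⟨ht0, z3⟩
  obtain ⟨ht0, h1t0⟩ := key
  -- step B: optimality at h₁ against the constant-a¹ policy
  have hAtt1 : Attainable (fun o => if o = false then (1:ℝ) else 0) rho h₁ :=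
    Attainable.step h₀ false false hAtt0 (by norm_num)
  have step1 : propPhi (Dpi rho cT 1 h₁) ≤ propPhi (Dpi rho π 1 h₁) :=
    hopt h₁ hAtt1 (by norm_num [hlen]) cT hcT
  have phiT : propPhi (Dpi rho cT 1 h₁) = 1 := by
    have hcond : ∀ ω, Dpi rho cT 1 h₁ ω ≠ 0 → inCyl ω := by
      intro ω hω
      simp only [Dpi, hext, Fintype.sum_bool, hcTdef] at hω
      norm_num at hω
      by_contra hne
      apply hω
      have e1 : ω ≠ (false, [(false, false), (true, true)]) := by
        rintro rfl; exact hne (by simp [inCyl])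
      have e2 : ω ≠ (false, [(false, false), (true, false)]) := by
        rintro rfl; exact hne (by simp [inCyl])
      simp [e1, e2]
    have hs : ∑ ω ∈ trajFinset Bool Bool 2, Dpi rho cT 1 h₁ ω * countA1 ω = 1 := by
      rw [sum_traj2]
      simp [Fintype.sum_prod_type, Fintype.sum_bool, Dpi, hext, countA1, hcTdef]
      norm_num
    unfold propPhi; rw [if_pos hcond, hs]
  have phiP : propPhi (Dpi rho π 1 h₁) = 0 := by
    have hs : ∑ ω ∈ trajFinset Bool Bool 2, Dpi rho π 1 h₁ ω * countA1 ω = 0 := by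
      rw [sum_traj2]
      simp [Fintype.sum_prod_type, Fintype.sum_bool, Dpi, hext, countA1, h1t0]
    unfold propPhi; split <;> simp [hs]
  rw [phiT, phiP] at step1
  linarith
end
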